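/- Let f : ℝ^m × ℝ^n → [−1,1] be measurable with y ↦ f(x,y) being L₀-Lipschitz for every x ∈ ℝ^m. Let p be a probability density on ℝ^m, let X₁, …, X_M be i.i.d. random vectors with density p, and let r, Δ, ρ > 0. Then ℙ[ sup_{‖y‖ ≤ r} |(1/M) ∑_{i=1}^M f(X_i, y) − E_{X∼p}[f(X, y)]| > ρ + 2L₀Δ ] ≤ 2 (1 + 2r/Δ)^n exp(−ρ² M / 2). -/

import Mathlib

open MeasureTheory Real ProbabilityTheory

noncomputable section

abbrev E (d : ℕ) := EuclideanSpace ℝ (Fin d)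

def IsDensity {d : ℕ} (p : E d → ℝ) : Prop :=
  Measurable p ∧ (∀ θ, 0 ≤ p θ) ∧ ∫ θ, p θ = 1

lemma Dpos {p h : ℝ} (hp0 : 0 ≤ p) (hp1 : p ≤ 1) : 0 < 1 - p + p * Real.exp h := by
  rcases lt_or_eq_of_le hp1 with h1 | h1
  · have := Real.exp_pos h
    nlinarith
  · subst h1; simpa using Real.exp_pos h

lemma core_ineq {p : ℝ} (hp0 : 0 ≤ p) (hp1 : p ≤ 1) (h : ℝ) :
    Real.exp (-p * h) * (1 - p + p * Real.exp h) ≤ Real.exp (h ^ 2 / 8) := by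
  set D : ℝ → ℝ := fun x => 1 - p + p * Real.exp x with hD
  have hDpos : ∀ x, 0 < D x := fun x => Dpos hp0 hp1
  set φ : ℝ → ℝ := fun x => x ^ 2 / 8 + p * x - Real.log (D x) with hφ
  set φ' : ℝ → ℝ := fun x => x / 4 + p - p * Real.exp x / D x with hφ'
  have hDder : ∀ x, HasDerivAt D (p * Real.exp x) x := fun x => by
    exact ((Real.hasDerivAt_exp x).const_mul p).const_add (1 - p)
  have hφder : ∀ x, HasDerivAt φ (φ' x) x := fun x => by
    have h1 : HasDerivAt (fun x : ℝ => x ^ 2 / 8 + p * x) (x / 4 + p) x := by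
      have := ((hasDerivAt_pow 2 x).div_const 8).add ((hasDerivAt_id x).const_mul p)
      exact this.congr_deriv (by ring)
    have h2 : HasDerivAt (fun x => Real.log (D x)) (p * Real.exp x / D x) x :=
      (hDder x).log (hDpos x).ne'
    exact h1.sub h2
  have hφ'der : ∀ x, HasDerivAt φ' (1 / 4 - p * Real.exp x * (1 - p) / (D x) ^ 2) x := by
    intro x
    have h1 : HasDerivAt (fun x : ℝ => x / 4 + p) (1 / 4) x := by
      simpa using (hasDerivAt_id x).div_const 4 |>.add_const p
    have h2 : HasDerivAt (fun x => p * Real.exp x / D x)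
        ((p * Real.exp x * D x - p * Real.exp x * (p * Real.exp x)) / (D x) ^ 2) x :=
      ((Real.hasDerivAt_exp x).const_mul p).div (hDder x) (hDpos x).ne'
    have heq : (p * Real.exp x * D x - p * Real.exp x * (p * Real.exp x)) / (D x) ^ 2
        = p * Real.exp x * (1 - p) / (D x) ^ 2 := by
      congr 1; simp only [hD]; ring
    rw [heq] at h2
    exact h1.sub h2
  have hsecond : ∀ x, 0 ≤ 1 / 4 - p * Real.exp x * (1 - p) / (D x) ^ 2 := by
    intro x
    rw [sub_nonneg, div_le_iff₀ (pow_pos (hDpos x) 2)]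
    have : D x = 1 - p + p * Real.exp x := rfl
    nlinarith [sq_nonneg (1 - p - p * Real.exp x), (Real.exp_pos x).le, hDpos x]
  have hφ'mono : Monotone φ' :=
    monotone_of_deriv_nonneg (fun x => (hφ'der x).differentiableAt)
      (fun x => by rw [(hφ'der x).deriv]; exact hsecond x)
  have hφ'0 : φ' 0 = 0 := by
    simp only [hφ', hD]
    simp
  have hφcont : Continuous φ := by
    have : Differentiable ℝ φ := fun x => (hφder x).differentiableAt
    exact this.continuous
  have hφ0 : φ 0 = 0 := by simp [hφ, hD]
  have key : ∀ x, 0 ≤ φ x := by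
    intro x
    rcases le_or_gt 0 x with hx | hx
    · have hmono : MonotoneOn φ (Set.Ici 0) := by
        refine monotoneOn_of_deriv_nonneg (convex_Ici 0) hφcont.continuousOn
          (fun y hy => (hφder y).differentiableAt.differentiableWithinAt) (fun y hy => ?_)
        rw [(hφder y).deriv]
        rw [interior_Ici] at hy
        have := hφ'mono (le_of_lt hy)
        rw [hφ'0] at this
        exact this
      have := hmono (Set.self_mem_Ici) (Set.mem_Ici.mpr hx) hx
      rwa [hφ0] at this
    · have hmono : AntitoneOn φ (Set.Iic 0) := by
        refine antitoneOn_of_deriv_nonpos (convex_Iic 0) hφcont.continuousOn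
          (fun y hy => (hφder y).differentiableAt.differentiableWithinAt) (fun y hy => ?_)
        rw [(hφder y).deriv]
        rw [interior_Iic] at hy
        have := hφ'mono (le_of_lt hy)
        rw [hφ'0] at this
        exact this
      have := hmono (Set.mem_Iic.mpr hx.le) (Set.self_mem_Iic) hx.le
      rwa [hφ0] at this
  have hlog : Real.log (D h) ≤ h ^ 2 / 8 + p * h := by
    have := key h; simp only [hφ] at this; linarith
  have hDle : D h ≤ Real.exp (h ^ 2 / 8 + p * h) :=
    (Real.log_le_iff_le_exp (hDpos h)).mp hlog
  calc Real.exp (-p * h) * D h ≤ Real.exp (-p * h) * Real.exp (h ^ 2 / 8 + p * h) := by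
        exact mul_le_mul_of_nonneg_left hDle (Real.exp_pos _).le
    _ = Real.exp (h ^ 2 / 8) := by rw [← Real.exp_add]; ring_nf

lemma integrable_of_bdd {Ω : Type*} [MeasureSpace Ω] [IsProbabilityMeasure (ℙ : Measure Ω)]
    {Y : Ω → ℝ} (hm : Measurable Y) {C : ℝ} (hC : ∀ ω, |Y ω| ≤ C) :
    Integrable Y ℙ :=
  (integrable_const C).mono' hm.aestronglyMeasurable (Filter.Eventually.of_forall hC)

lemma hoeffding_mgf {Ω : Type*} [MeasureSpace Ω] [IsProbabilityMeasure (ℙ : Measure Ω)]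
    {Y : Ω → ℝ} (hm : Measurable Y) {a : ℝ} (hbdd : ∀ ω, Y ω ∈ Set.Icc a (a + 2))
    (hmean : ∫ ω, Y ω = 0) (t : ℝ) :
    mgf Y ℙ t ≤ Real.exp (t ^ 2 / 2) := by
  have hYabs : ∀ ω, |Y ω| ≤ |a| + 2 := fun ω => abs_le.mpr
    ⟨by nlinarith [neg_abs_le a, (hbdd ω).1], by nlinarith [le_abs_self a, (hbdd ω).2]⟩
  have hYint : Integrable Y ℙ := integrable_of_bdd hm hYabs
  have ha0 : a ≤ 0 := by
    have h1 : ∫ ω, (a : ℝ) ∂(ℙ : Measure Ω) ≤ ∫ ω, Y ω :=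
      integral_mono (integrable_const a) hYint (fun ω => (hbdd ω).1)
    simpa [hmean] using h1
  have hb0 : 0 ≤ a + 2 := by
    have h1 : ∫ ω, Y ω ≤ ∫ ω, (a + 2 : ℝ) ∂(ℙ : Measure Ω) :=
      integral_mono hYint (integrable_const _) (fun ω => (hbdd ω).2)
    simpa [hmean] using h1
  set p : ℝ := -a / 2 with hp
  have hp0 : 0 ≤ p := by simp only [hp]; linarith
  have hp1 : p ≤ 1 := by simp only [hp]; linarith
  -- pointwise convexity bound
  have hconv : ∀ ω, Real.exp (t * Y ω) ≤
      (a + 2 - Y ω) / 2 * Real.exp (t * a) + (Y ω - a) / 2 * Real.exp (t * (a + 2)) := by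
    intro ω
    have h1 := (hbdd ω).1; have h2 := (hbdd ω).2
    have hθ1 : 0 ≤ (a + 2 - Y ω) / 2 := by linarith
    have hθ2 : 0 ≤ (Y ω - a) / 2 := by linarith
    have hsum : (a + 2 - Y ω) / 2 + (Y ω - a) / 2 = 1 := by ring
    have := convexOn_exp.2 (Set.mem_univ (t * a)) (Set.mem_univ (t * (a + 2)))
      hθ1 hθ2 hsum
    have harg : ((a + 2 - Y ω) / 2) • (t * a) + ((Y ω - a) / 2) • (t * (a + 2)) = t * Y ω := by
      simp only [smul_eq_mul]; ring
    rw [harg] at this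
    simpa only [smul_eq_mul] using this
  have hmgf : mgf Y ℙ t = ∫ ω, Real.exp (t * Y ω) := rfl
  have hintexp : Integrable (fun ω => Real.exp (t * Y ω)) ℙ := by
    refine integrable_of_bdd (by fun_prop) (C := Real.exp (|t| * (|a| + 2))) (fun ω => ?_)
    rw [abs_of_pos (Real.exp_pos _)]
    apply Real.exp_le_exp.mpr
    calc t * Y ω ≤ |t * Y ω| := le_abs_self _
      _ = |t| * |Y ω| := abs_mul _ _
      _ ≤ |t| * (|a| + 2) := mul_le_mul_of_nonneg_left (hYabs ω) (abs_nonneg t)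
  set c1 : ℝ := (a + 2) / 2 * Real.exp (t * a) + (-a) / 2 * Real.exp (t * (a + 2)) with hc1
  set c2 : ℝ := (Real.exp (t * (a + 2)) - Real.exp (t * a)) / 2 with hc2
  have hpt : ∀ ω, (a + 2 - Y ω) / 2 * Real.exp (t * a) + (Y ω - a) / 2 * Real.exp (t * (a + 2))
      = c1 + Y ω * c2 := fun ω => by simp only [hc1, hc2]; ring
  have hconv' : ∀ ω, Real.exp (t * Y ω) ≤ c1 + Y ω * c2 := fun ω => (hconv ω).trans_eq (hpt ω)
  have hle1 : mgf Y ℙ t ≤ c1 := by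
    rw [hmgf]
    have := integral_mono hintexp ((integrable_const c1).add (hYint.mul_const c2)) hconv'
    refine this.trans_eq ?_
    simp only [Pi.add_apply]
    rw [integral_add (integrable_const c1) (hYint.mul_const c2), integral_const,
      integral_mul_const, hmean]
    simp
  refine hle1.trans ?_
  have key := core_ineq hp0 hp1 (2 * t)
  have e1 : Real.exp (-p * (2 * t)) = Real.exp (t * a) := by
    congr 1; simp only [hp]; ring
  have e2 : (2 * t) ^ 2 / 8 = t ^ 2 / 2 := by ring
  rw [e1, e2] at key
  have expand : Real.exp (t * a) * (1 - p + p * Real.exp (2 * t)) = c1 := by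
    have h3 : Real.exp (t * (a + 2)) = Real.exp (t * a) * Real.exp (2 * t) := by
      rw [← Real.exp_add]; ring_nf
    simp only [hc1, h3, hp]; ring
  rw [expand] at key
  exact key

lemma chernoff_one {Ω : Type*} [MeasureSpace Ω] [IsProbabilityMeasure (ℙ : Measure Ω)]
    {M : ℕ} {Z : Fin M → Ω → ℝ} (hmeas : ∀ i, Measurable (Z i))
    (hindep : iIndepFun Z ℙ)
    {a : Fin M → ℝ} (hbdd : ∀ i ω, Z i ω ∈ Set.Icc (a i) (a i + 2))
    (hmean : ∀ i, ∫ ω, Z i ω = 0) {ρ : ℝ} (hρ : 0 < ρ) :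
    ℙ {ω | (M : ℝ) * ρ ≤ ∑ i, Z i ω} ≤ ENNReal.ofReal (Real.exp (-ρ ^ 2 * M / 2)) := by
  set S : Ω → ℝ := ∑ i, Z i with hS
  have hSval : ∀ ω, S ω = ∑ i, Z i ω := fun ω => by simp [hS]
  have hSmeas : Measurable S := by
    have he : S = fun ω => ∑ i, Z i ω := funext hSval
    rw [he]; exact Finset.measurable_sum _ (fun i _ => hmeas i)
  have hint : ∀ (t : ℝ) i, Integrable (fun ω => Real.exp (t * Z i ω)) ℙ := by
    intro t i
    refine integrable_of_bdd (by fun_prop) (C := Real.exp (|t| * (|a i| + 2))) (fun ω => ?_)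
    rw [abs_of_pos (Real.exp_pos _)]
    apply Real.exp_le_exp.mpr
    have h1 := (hbdd i ω).1; have h2 := (hbdd i ω).2
    have habs : |Z i ω| ≤ |a i| + 2 := abs_le.mpr
      ⟨by nlinarith [neg_abs_le (a i)], by nlinarith [le_abs_self (a i)]⟩
    calc t * Z i ω ≤ |t * Z i ω| := le_abs_self _
      _ = |t| * |Z i ω| := abs_mul _ _
      _ ≤ |t| * (|a i| + 2) := mul_le_mul_of_nonneg_left habs (abs_nonneg t)
  have hmgf_sum : mgf S ℙ ρ = ∏ i, mgf (Z i) ℙ ρ := by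
    simpa [hS] using hindep.mgf_sum hmeas Finset.univ (t := ρ)
  have hmgfle : mgf S ℙ ρ ≤ Real.exp (ρ ^ 2 * M / 2) := by
    rw [hmgf_sum]
    calc ∏ i, mgf (Z i) ℙ ρ ≤ ∏ (_ : Fin M), Real.exp (ρ ^ 2 / 2) := by
          apply Finset.prod_le_prod (fun i _ => mgf_nonneg)
          exact fun i _ => hoeffding_mgf (hmeas i) (hbdd i) (hmean i) ρ
      _ = Real.exp (ρ ^ 2 * M / 2) := by
          rw [Finset.prod_const, ← Real.exp_nat_mul]
          congr 1; simp; ring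
  have hSint : Integrable (fun ω => Real.exp (ρ * S ω)) ℙ := by
    refine integrable_of_bdd (by fun_prop)
      (C := Real.exp (|ρ| * ∑ i, (|a i| + 2))) (fun ω => ?_)
    rw [abs_of_pos (Real.exp_pos _)]
    apply Real.exp_le_exp.mpr
    have habs : |S ω| ≤ ∑ i, (|a i| + 2) := by
      rw [hSval]
      refine (Finset.abs_sum_le_sum_abs _ _).trans (Finset.sum_le_sum fun i _ => ?_)
      have h1 := (hbdd i ω).1; have h2 := (hbdd i ω).2
      exact abs_le.mpr ⟨by nlinarith [neg_abs_le (a i)], by nlinarith [le_abs_self (a i)]⟩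
    calc ρ * S ω ≤ |ρ * S ω| := le_abs_self _
      _ = |ρ| * |S ω| := abs_mul _ _
      _ ≤ |ρ| * ∑ i, (|a i| + 2) := mul_le_mul_of_nonneg_left habs (abs_nonneg ρ)
  have hch := measure_ge_le_exp_mul_mgf (μ := ℙ) (X := S) ((M : ℝ) * ρ) hρ.le hSint
  have hbound : Real.exp (-ρ * ((M : ℝ) * ρ)) * mgf S ℙ ρ ≤ Real.exp (-ρ ^ 2 * M / 2) := by
    calc Real.exp (-ρ * ((M : ℝ) * ρ)) * mgf S ℙ ρ
        ≤ Real.exp (-ρ * ((M : ℝ) * ρ)) * Real.exp (ρ ^ 2 * M / 2) :=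
          mul_le_mul_of_nonneg_left hmgfle (Real.exp_pos _).le
      _ = Real.exp (-ρ ^ 2 * M / 2) := by rw [← Real.exp_add]; congr 1; ring
  have : (ℙ {ω | (M : ℝ) * ρ ≤ S ω}).toReal ≤ Real.exp (-ρ ^ 2 * M / 2) := hch.trans hbound
  have hfin : ℙ {ω | (M : ℝ) * ρ ≤ S ω} ≠ ⊤ := measure_ne_top _ _
  have := ENNReal.ofReal_le_ofReal this
  rw [ENNReal.ofReal_toReal hfin] at this
  have hset : {ω | (M : ℝ) * ρ ≤ ∑ i, Z i ω} = {ω | (M : ℝ) * ρ ≤ S ω} := by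
    ext ω; simp [hSval]
  rw [hset]; exact this

lemma chernoff_abs {Ω : Type*} [MeasureSpace Ω] [IsProbabilityMeasure (ℙ : Measure Ω)]
    {M : ℕ} {Z : Fin M → Ω → ℝ} (hmeas : ∀ i, Measurable (Z i))
    (hindep : iIndepFun Z ℙ)
    {a : Fin M → ℝ} (hbdd : ∀ i ω, Z i ω ∈ Set.Icc (a i) (a i + 2))
    (hmean : ∀ i, ∫ ω, Z i ω = 0) {ρ : ℝ} (hρ : 0 < ρ) :
    ℙ {ω | (M : ℝ) * ρ ≤ |∑ i, Z i ω|} ≤ ENNReal.ofReal (2 * Real.exp (-ρ ^ 2 * M / 2)) := by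
  have hsub : {ω | (M : ℝ) * ρ ≤ |∑ i, Z i ω|} ⊆
      {ω | (M : ℝ) * ρ ≤ ∑ i, Z i ω} ∪ {ω | (M : ℝ) * ρ ≤ ∑ i, (fun ω => -Z i ω) ω} := by
    intro ω hω
    simp only [Set.mem_setOf_eq] at hω ⊢
    rcases abs_cases (∑ i, Z i ω) with ⟨he, _⟩ | ⟨he, _⟩
    · left; rwa [he] at hω
    · right; rw [he] at hω; simpa [Finset.sum_neg_distrib] using hω
  have h2 : ℙ {ω | (M : ℝ) * ρ ≤ ∑ i, (fun ω => -Z i ω) ω}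
      ≤ ENNReal.ofReal (Real.exp (-ρ ^ 2 * M / 2)) := by
    refine chernoff_one (fun i => (hmeas i).neg) ?_ (a := fun i => -(a i) - 2)
      (fun i ω => ?_) (fun i => by simp [integral_neg, hmean i]) hρ
    · exact hindep.comp (fun i => fun x => -x) (fun i => measurable_neg)
    · have h1 := (hbdd i ω).1; have h2 := (hbdd i ω).2
      constructor <;> simp <;> linarith
  calc ℙ {ω | (M : ℝ) * ρ ≤ |∑ i, Z i ω|}
      ≤ ℙ ({ω | (M : ℝ) * ρ ≤ ∑ i, Z i ω} ∪ {ω | (M : ℝ) * ρ ≤ ∑ i, (fun ω => -Z i ω) ω}) :=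
        measure_mono hsub
    _ ≤ ℙ {ω | (M : ℝ) * ρ ≤ ∑ i, Z i ω} + ℙ {ω | (M : ℝ) * ρ ≤ ∑ i, (fun ω => -Z i ω) ω} :=
        measure_union_le _ _
    _ ≤ ENNReal.ofReal (Real.exp (-ρ ^ 2 * M / 2)) + ENNReal.ofReal (Real.exp (-ρ ^ 2 * M / 2)) :=
        add_le_add (chernoff_one hmeas hindep hbdd hmean hρ) h2
    _ = ENNReal.ofReal (2 * Real.exp (-ρ ^ 2 * M / 2)) := by
        rw [← ENNReal.ofReal_add (Real.exp_pos _).le (Real.exp_pos _).le]; congr 1; ring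

open Metric Set in
lemma covering_ball (n : ℕ) {r Δ : ℝ} (hr : 0 < r) (hΔ : 0 < Δ) :
    ∃ N : Finset (E n), (N.card : ℝ) ≤ (1 + 2 * r / Δ) ^ n ∧
      ∀ y : E n, ‖y‖ ≤ r → ∃ z ∈ N, ‖y - z‖ ≤ Δ := by
  set B : Set (E n) := closedBall 0 r with hB
  set Sep : Set (Set (E n)) :=
    {s | s ⊆ B ∧ s.Pairwise (fun x y => Δ ≤ dist x y)} with hSep
  obtain ⟨s, hmax⟩ : ∃ s, Maximal (· ∈ Sep) s := by
    apply zorn_subset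
    intro c hcS hchain
    refine ⟨⋃₀ c, ⟨?_, ?_⟩, fun t ht => subset_sUnion_of_mem ht⟩
    · exact sUnion_subset fun t ht => (hcS ht).1
    · intro x hx y hy hxy
      obtain ⟨tx, htx, hxtx⟩ := hx
      obtain ⟨ty, hty, hyty⟩ := hy
      rcases hchain.total htx hty with hsub | hsub
      · exact (hcS hty).2 (hsub hxtx) hyty hxy
      · exact (hcS htx).2 hxtx (hsub hyty) hxy
  have hsSep : s ∈ Sep := hmax.1
  have hsmax : ∀ t ∈ Sep, s ⊆ t → t = s := fun t ht hst =>
    Set.Subset.antisymm (hmax.2 ht hst) hst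
  have hfinrank : Module.finrank ℝ (E n) = n := finrank_euclideanSpace_fin
  have hΔ2 : (0 : ℝ) < Δ / 2 := by linarith
  set V : ENNReal := volume (ball (0 : E n) 1) with hV
  have hVpos : 0 < V := measure_ball_pos _ _ one_pos
  have hVfin : V ≠ ⊤ := measure_ball_lt_top.ne
  have hbound_pos : (0 : ℝ) < (1 + 2 * r / Δ) ^ n := by positivity
  have hcard : ∀ t : Finset (E n), ↑t ⊆ s → (t.card : ℝ) ≤ (1 + 2 * r / Δ) ^ n := by
    intro t hts
    have hdisj : (↑t : Set (E n)).PairwiseDisjoint (fun x => ball x (Δ / 2)) := by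
      intro x hx y hy hxy
      have hsep := hsSep.2 (hts hx) (hts hy) hxy
      refine Set.disjoint_left.mpr fun w hwx hwy => ?_
      rw [mem_ball] at hwx hwy
      have h1 := dist_triangle x w y
      rw [dist_comm x w] at h1
      rw [dist_comm w y] at hwy
      rw [dist_comm y w] at hwy
      linarith
    have hunion : (⋃ x ∈ t, ball x (Δ / 2)) ⊆ closedBall (0 : E n) (r + Δ / 2) := by
      intro w hw
      simp only [mem_iUnion, exists_prop] at hw
      obtain ⟨x, hxt, hwx⟩ := hw
      have hxB : x ∈ B := hsSep.1 (hts hxt)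
      rw [mem_closedBall, dist_zero_right] at hxB ⊢
      rw [mem_ball] at hwx
      calc ‖w‖ = ‖x + (w - x)‖ := by congr 1; abel
        _ ≤ ‖x‖ + ‖w - x‖ := norm_add_le _ _
        _ ≤ r + Δ / 2 := by
            have : ‖w - x‖ = dist w x := (dist_eq_norm _ _).symm
            rw [this]; exact add_le_add hxB hwx.le
    have hmeq : volume (⋃ x ∈ t, ball x (Δ / 2))
        = (t.card : ENNReal) * (ENNReal.ofReal ((Δ / 2) ^ n) * V) := by
      rw [measure_biUnion_finset hdisj (fun x _ => measurableSet_ball)]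
      have : ∀ x : E n, volume (ball x (Δ / 2)) = ENNReal.ofReal ((Δ / 2) ^ n) * V := by
        intro x
        rw [Measure.addHaar_ball_of_pos volume x hΔ2, hfinrank]
      simp only [this]
      rw [Finset.sum_const, nsmul_eq_mul]
    have hle : (t.card : ENNReal) * (ENNReal.ofReal ((Δ / 2) ^ n) * V)
        ≤ ENNReal.ofReal ((r + Δ / 2) ^ n) * V := by
      rw [← hmeq]
      calc volume (⋃ x ∈ t, ball x (Δ / 2)) ≤ volume (closedBall (0 : E n) (r + Δ / 2)) :=
            measure_mono hunion
        _ = ENNReal.ofReal ((r + Δ / 2) ^ n) * V := by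
            rw [Measure.addHaar_closedBall volume _ (by linarith : (0:ℝ) ≤ r + Δ / 2), hfinrank]
    have hle2 : (t.card : ENNReal) * ENNReal.ofReal ((Δ / 2) ^ n)
        ≤ ENNReal.ofReal ((r + Δ / 2) ^ n) := by
      rw [← mul_assoc] at hle
      exact (ENNReal.mul_le_mul_iff_left hVpos.ne' hVfin).mp hle
    have hle3 : (t.card : ℝ) * (Δ / 2) ^ n ≤ (r + Δ / 2) ^ n := by
      have : ((t.card : ENNReal)) * ENNReal.ofReal ((Δ / 2) ^ n)
          = ENNReal.ofReal ((t.card : ℝ) * (Δ / 2) ^ n) := by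
        rw [ENNReal.ofReal_mul (by positivity : (0:ℝ) ≤ (t.card : ℝ))]
        congr 1
        exact (ENNReal.ofReal_natCast t.card).symm
      rw [this] at hle2
      exact (ENNReal.ofReal_le_ofReal_iff (by positivity)).mp hle2
    have hkey : (1 + 2 * r / Δ) ^ n * (Δ / 2) ^ n = (r + Δ / 2) ^ n := by
      rw [← mul_pow]
      congr 1
      field_simp
      ring
    have := hle3.trans_eq hkey.symm
    exact le_of_mul_le_mul_right this (pow_pos hΔ2 n)
  -- s is finite
  have hsfin : s.Finite := by
    by_contra hinf
    obtain ⟨t, hts, htcard⟩ := Set.Infinite.exists_subset_card_eq hinf (⌈(1 + 2 * r / Δ) ^ n⌉₊ + 1)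
    have h1 := hcard t hts
    rw [htcard] at h1
    have h2 : (1 + 2 * r / Δ) ^ n ≤ (⌈(1 + 2 * r / Δ) ^ n⌉₊ : ℝ) := Nat.le_ceil _
    push_cast at h1
    linarith
  refine ⟨hsfin.toFinset, ?_, ?_⟩
  · apply hcard
    simp [Set.Finite.coe_toFinset]
  · intro y hy
    by_contra hcon
    push_neg at hcon
    have hsep : ∀ z ∈ s, Δ ≤ dist y z := by
      intro z hz
      have := hcon z (by simp [Set.Finite.mem_toFinset, hz])
      rw [dist_eq_norm]
      linarith
    have hyB : y ∈ B := by rw [mem_closedBall, dist_zero_right]; exact hy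
    have hins : insert y s ∈ Sep := by
      constructor
      · exact Set.insert_subset hyB hsSep.1
      · rw [Set.pairwise_insert]
        exact ⟨hsSep.2, fun z hz _ => ⟨hsep z hz, by rw [dist_comm]; exact hsep z hz⟩⟩
    have heq := hsmax _ hins (Set.subset_insert y s)
    have hys : y ∈ s := heq ▸ Set.mem_insert y s
    have := hsep y hys
    simp at this
    linarith

/-- Uniform concentration over a ball via covering numbers:
`ℙ[sup_{‖y‖≤r} |(1/M)∑ᵢ f(Xᵢ,y) − E_p[f(X,y)]| > ρ + 2L₀Δ]
  ≤ 2(1 + 2r/Δ)ⁿ exp(−ρ²M/2)`. -/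
theorem ball_uniform_concentration (m n M : ℕ) (L0 r Δ ρ : ℝ)
    (hL0 : 0 < L0) (hr : 0 < r) (hΔ : 0 < Δ) (hρ : 0 < ρ)
    (f : E m → E n → ℝ)
    (hf_meas : Measurable (fun z : E m × E n => f z.1 z.2))
    (hf_bdd : ∀ x y, f x y ∈ Set.Icc (-1 : ℝ) 1)
    (hf_lip : ∀ x, LipschitzWith (Real.toNNReal L0) (fun y => f x y))
    (Ω : Type*) [MeasureSpace Ω] [IsProbabilityMeasure (ℙ : Measure Ω)]
    (p : E m → ℝ) (hp : IsDensity p)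
    (X : Fin M → Ω → E m) (hX_meas : ∀ i, Measurable (X i))
    (hiid : iIndepFun X ℙ)
    (hlaw : ∀ i, Measure.map (X i) ℙ
      = volume.withDensity fun θ => ENNReal.ofReal (p θ)) :
    ℙ {ω | ∃ y : E n, ‖y‖ ≤ r ∧
        ρ + 2 * L0 * Δ <
          |(1 / (M : ℝ)) * ∑ i : Fin M, f (X i ω) y - ∫ x, f x y * p x|}
      ≤ ENNReal.ofReal
          (2 * (1 + 2 * r / Δ) ^ n * Real.exp (-ρ ^ 2 * M / 2)) := by
  obtain ⟨hpm, hpnn, hpint1⟩ := hp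
  have hpInt : Integrable p (volume : Measure (E m)) := by
    by_contra hni
    rw [integral_undef hni] at hpint1
    norm_num at hpint1
  -- measurability of sections
  have hfy_meas : ∀ y : E n, Measurable (fun x => f x y) := fun y =>
    hf_meas.comp (measurable_id.prodMk measurable_const)
  -- integrability of x ↦ f x y * p x
  have hfyp_int : ∀ y : E n, Integrable (fun x => f x y * p x) (volume : Measure (E m)) := by
    intro y
    refine hpInt.mono ((hfy_meas y).mul hpm).aestronglyMeasurable
      (Filter.Eventually.of_forall fun x => ?_)
    rw [norm_mul]
    simp only [norm_eq_abs]
    rw [abs_of_nonneg (hpnn x)]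
    have h1 := (hf_bdd x y).1; have h2 := (hf_bdd x y).2
    nlinarith [abs_le.mpr ⟨h1, h2⟩, hpnn x, abs_nonneg (f x y)]
  set μf : E n → ℝ := fun y => ∫ x, f x y * p x with hμf
  -- expectation identity
  have hexp : ∀ (i : Fin M) (y : E n), ∫ ω, f (X i ω) y ∂(ℙ : Measure Ω) = μf y := by
    intro i y
    have h1 : ∫ ω, f (X i ω) y ∂(ℙ : Measure Ω)
        = ∫ x, f x y ∂(Measure.map (X i) ℙ) :=
      (integral_map (hX_meas i).aemeasurable (hfy_meas y).aestronglyMeasurable).symm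
    rw [h1, hlaw i]
    have h2 : (fun θ => ENNReal.ofReal (p θ)) = (fun θ => ((p θ).toNNReal : ENNReal)) := rfl
    rw [h2]
    rw [integral_withDensity_eq_integral_smul (by fun_prop : Measurable fun θ => (p θ).toNNReal)]
    simp only [hμf]
    congr 1
    ext x
    rw [NNReal.smul_def, smul_eq_mul, Real.coe_toNNReal _ (hpnn x), mul_comm]
  -- L0-Lipschitz bounds
  have hflip : ∀ (x : E m) (y z : E n), |f x y - f x z| ≤ L0 * ‖y - z‖ := by
    intro x y z
    have := (hf_lip x).dist_le_mul y z
    rw [Real.dist_eq, dist_eq_norm] at this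
    refine this.trans ?_
    gcongr
    exact Real.coe_toNNReal L0 hL0.le |>.le
  -- integral Lipschitz
  have hμf_lip : ∀ y z : E n, ‖y - z‖ ≤ Δ → |μf y - μf z| ≤ L0 * Δ := by
    intro y z hyz
    have hdiff_int : Integrable (fun x => (f x y - f x z) * p x) (volume : Measure (E m)) := by
      have he : (fun x => (f x y - f x z) * p x)
          = fun x => f x y * p x - f x z * p x := by ext x; ring
      rw [he]; exact (hfyp_int y).sub (hfyp_int z)
    have hsub : μf y - μf z = ∫ x, (f x y - f x z) * p x := by
      simp only [hμf]
      rw [← integral_sub (hfyp_int y) (hfyp_int z)]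
      congr 1; ext x; ring
    rw [hsub]
    have habs : |∫ x, (f x y - f x z) * p x| ≤ ∫ x, |f x y - f x z| * |p x| := by
      simpa [Real.norm_eq_abs, abs_mul] using
        norm_integral_le_integral_norm (μ := (volume : Measure (E m)))
          (fun x => (f x y - f x z) * p x)
    refine habs.trans ?_
    have hle : ∀ x, |f x y - f x z| * |p x| ≤ (L0 * Δ) * p x := by
      intro x
      rw [abs_of_nonneg (hpnn x)]
      have h1 : |f x y - f x z| ≤ L0 * Δ :=
        (hflip x y z).trans (mul_le_mul_of_nonneg_left hyz hL0.le)
      exact mul_le_mul_of_nonneg_right h1 (hpnn x)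
    have hai : Integrable (fun x => |f x y - f x z| * |p x|) (volume : Measure (E m)) := by
      have he : (fun x => |f x y - f x z| * |p x|) = fun x => |(f x y - f x z) * p x| := by
        ext x; rw [abs_mul]
      rw [he]; exact hdiff_int.abs
    have := integral_mono hai (hpInt.const_mul (L0 * Δ)) hle
    refine this.trans ?_
    rw [integral_const_mul, hpint1, mul_one]
  -- covering net
  obtain ⟨N, hNcard, hNcover⟩ := covering_ball n hr hΔ
  -- Chernoff bound for each net point
  set A : E n → Set Ω := fun z => {ω | (M : ℝ) * ρ ≤ |∑ i, (f (X i ω) z - μf z)|} with hA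
  have hfX_int : ∀ (i : Fin M) (z : E n),
      Integrable (fun ω => f (X i ω) z) (ℙ : Measure Ω) := by
    intro i z
    refine integrable_of_bdd ((hfy_meas z).comp (hX_meas i)) (C := 1) (fun ω => ?_)
    have h1 := (hf_bdd (X i ω) z).1; have h2 := (hf_bdd (X i ω) z).2
    rw [abs_le]; exact ⟨h1, h2⟩
  have hA_bound : ∀ z : E n, ℙ (A z) ≤ ENNReal.ofReal (2 * Real.exp (-ρ ^ 2 * M / 2)) := by
    intro z
    refine chernoff_abs (Z := fun i ω => f (X i ω) z - μf z)
      (fun i => ((hfy_meas z).comp (hX_meas i)).sub measurable_const)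
      ?_ (a := fun _ => -1 - μf z) (fun i ω => ?_) (fun i => ?_) hρ
    · exact hiid.comp (fun _ x => f x z - μf z) (fun _ => (hfy_meas z).sub measurable_const)
    · have h1 := (hf_bdd (X i ω) z).1; have h2 := (hf_bdd (X i ω) z).2
      constructor
      · show -1 - μf z ≤ f (X i ω) z - μf z; linarith
      · show f (X i ω) z - μf z ≤ -1 - μf z + 2; linarith
    · rw [integral_sub (hfX_int i z) (integrable_const _), hexp i z, integral_const]
      simp
  -- event inclusion
  have hsub : {ω | ∃ y : E n, ‖y‖ ≤ r ∧
        ρ + 2 * L0 * Δ <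
          |(1 / (M : ℝ)) * ∑ i : Fin M, f (X i ω) y - ∫ x, f x y * p x|}
      ⊆ ⋃ z ∈ N, A z := by
    rintro ω ⟨y, hy, hlt⟩
    obtain ⟨z, hzN, hyz⟩ := hNcover y hy
    refine Set.mem_biUnion hzN ?_
    show (M : ℝ) * ρ ≤ |∑ i, (f (X i ω) z - μf z)|
    rcases Nat.eq_zero_or_pos M with hM | hM
    · subst hM; simp
    · have hMpos : (0 : ℝ) < M := by exact_mod_cast hM
      have hμless : |μf y - μf z| ≤ L0 * Δ := hμf_lip y z hyz
      have havg : |(1 / (M : ℝ)) * ∑ i : Fin M, f (X i ω) y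
          - (1 / (M : ℝ)) * ∑ i : Fin M, f (X i ω) z| ≤ L0 * Δ := by
        rw [← mul_sub, ← Finset.sum_sub_distrib, abs_mul]
        have hsum : |∑ i : Fin M, (f (X i ω) y - f (X i ω) z)| ≤ (M : ℝ) * (L0 * Δ) := by
          refine (Finset.abs_sum_le_sum_abs _ _).trans ?_
          have := Finset.sum_le_sum (s := Finset.univ)
            (fun (i : Fin M) _ => (hflip (X i ω) y z).trans
              (mul_le_mul_of_nonneg_left hyz hL0.le))
          rw [Finset.sum_const, Finset.card_univ, Fintype.card_fin, nsmul_eq_mul] at this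
          exact this
        have h1M : |1 / (M : ℝ)| = 1 / (M : ℝ) := abs_of_pos (by positivity)
        rw [h1M]
        calc (1 / (M : ℝ)) * |∑ i : Fin M, (f (X i ω) y - f (X i ω) z)|
            ≤ (1 / (M : ℝ)) * ((M : ℝ) * (L0 * Δ)) := by
              exact mul_le_mul_of_nonneg_left hsum (by positivity)
          _ = L0 * Δ := by field_simp
      set Ay := (1 / (M : ℝ)) * ∑ i : Fin M, f (X i ω) y with hAy
      set Az := (1 / (M : ℝ)) * ∑ i : Fin M, f (X i ω) z with hAz
      have hlt' : ρ + 2 * L0 * Δ < |Ay - μf y| := hlt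
      have key : ρ < |Az - μf z| := by
        have htri : |Ay - μf y| ≤ |Az - μf z| + |Ay - Az| + |μf z - μf y| := by
          have : Ay - μf y = (Az - μf z) + (Ay - Az) + (μf z - μf y) := by ring
          rw [this]
          exact (abs_add_le _ _).trans (add_le_add_left (abs_add_le _ _) _)
        rw [abs_sub_comm (μf z) (μf y)] at htri
        linarith
      have hsum_eq : ∑ i : Fin M, (f (X i ω) z - μf z) = (M : ℝ) * (Az - μf z) := by
        rw [Finset.sum_sub_distrib, Finset.sum_const, Finset.card_univ, Fintype.card_fin,
          nsmul_eq_mul, hAz]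
        field_simp
      rw [hsum_eq, abs_mul, abs_of_pos hMpos]
      exact (mul_le_mul_of_nonneg_left key.le hMpos.le)
  -- union bound
  calc ℙ {ω | ∃ y : E n, ‖y‖ ≤ r ∧
        ρ + 2 * L0 * Δ <
          |(1 / (M : ℝ)) * ∑ i : Fin M, f (X i ω) y - ∫ x, f x y * p x|}
      ≤ ℙ (⋃ z ∈ N, A z) := measure_mono hsub
    _ ≤ ∑ z ∈ N, ℙ (A z) := measure_biUnion_finset_le N A
    _ ≤ ∑ _z ∈ N, ENNReal.ofReal (2 * Real.exp (-ρ ^ 2 * M / 2)) :=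
        Finset.sum_le_sum (fun z _ => hA_bound z)
    _ = (N.card : ENNReal) * ENNReal.ofReal (2 * Real.exp (-ρ ^ 2 * M / 2)) := by
        rw [Finset.sum_const, nsmul_eq_mul]
    _ ≤ ENNReal.ofReal (2 * (1 + 2 * r / Δ) ^ n * Real.exp (-ρ ^ 2 * M / 2)) := by
        rw [← ENNReal.ofReal_natCast N.card,
          ← ENNReal.ofReal_mul (by positivity : (0:ℝ) ≤ (N.card : ℝ))]
        apply ENNReal.ofReal_le_ofReal
        have h2e : (0:ℝ) ≤ 2 * Real.exp (-ρ ^ 2 * M / 2) := by positivity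
        calc (N.card : ℝ) * (2 * Real.exp (-ρ ^ 2 * M / 2))
            ≤ (1 + 2 * r / Δ) ^ n * (2 * Real.exp (-ρ ^ 2 * M / 2)) :=
              mul_le_mul_of_nonneg_right hNcard h2e
          _ = 2 * (1 + 2 * r / Δ) ^ n * Real.exp (-ρ ^ 2 * M / 2) := by ring
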